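/- Let F be an SCF on 3 alternatives with M^{a,b}(F) ≤ ε₁ for all pairs (a,b), and let G be the derived pairwise-majority-of-conditional-probabilities GSWF. Then NT(G), the probability over a uniform profile that G's output is non-transitive (equivalently, has no Generalized Condorcet Winner among 3 alternatives), is at most 3√ε₁. -/

import Mathlib

open Finset
open scoped Classical

/-- A linear order on the three alternatives `{0,1,2}`, represented by its ranking
permutation: `σ a` is the rank of alternative `a` (rank `0` is most preferred). -/
abbrev Order3 := Equiv.Perm (Fin 3)

/-- A profile of `n` voters on three alternatives. -/
abbrev Profile (n : ℕ) := Fin n → Order3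

/-- Voter with ranking `σ` prefers alternative `a` over alternative `b`. -/
def Prefers (σ : Order3) (a b : Fin 3) : Prop := σ a < σ b

/-- The column `x^{a,b} ∈ {0,1}ⁿ` of individual preferences between `a` and `b`. -/
noncomputable def col (n : ℕ) (x : Profile n) (a b : Fin 3) : Fin n → Bool :=
  fun i => decide (Prefers (x i) a b)

/-- `M^{a,b}(F)`: the probability that `F x = a` and `F x' = b`, where `x, x'` are uniform
on profiles conditioned on agreeing in all individual preferences between `a` and `b`. -/
noncomputable def Mab (n : ℕ) (F : Profile n → Fin 3) (a b : Fin 3) : ℝ :=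
  ((univ.filter (fun p : Profile n × Profile n =>
      col n p.1 a b = col n p.2 a b ∧ F p.1 = a ∧ F p.2 = b)).card : ℝ) /
  ((univ.filter (fun p : Profile n × Profile n =>
      col n p.1 a b = col n p.2 a b)).card : ℝ)

/-- The manipulation power `M_i(F)`: the probability over a uniform profile `x` and a uniform
ballot `x'_i` that `x'_i` is a profitable manipulation for voter `i` at `x`. -/
noncomputable def Mi (n : ℕ) (F : Profile n → Fin 3) (i : Fin n) : ℝ :=
  ((univ.filter (fun p : Profile n × Order3 =>
      Prefers (p.1 i) (F (Function.update p.1 i p.2)) (F p.1))).card : ℝ) /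
  (Fintype.card (Profile n × Order3) : ℝ)

/-- `Pr_{x'}[F x' = w ∣ x'^{a,b} = x^{a,b}]`. -/
noncomputable def condP (n : ℕ) (F : Profile n → Fin 3) (a b w : Fin 3) (x : Profile n) : ℝ :=
  ((univ.filter (fun y : Profile n => col n y a b = col n x a b ∧ F y = w)).card : ℝ) /
  ((univ.filter (fun y : Profile n => col n y a b = col n x a b)).card : ℝ)

/-- The derived pairwise GSWF `G^{a,b}`: `a` beats `b` iff, conditioned on the `(a,b)`-column,
the outcome `a` is more likely than the outcome `b`; ties are broken according to the
preference of the fixed voter `i₀` between `a` and `b`. -/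
noncomputable def Gscf (n : ℕ) (F : Profile n → Fin 3) (a b : Fin 3) (i₀ : Fin n)
    (x : Profile n) : Bool :=
  if condP n F a b a x > condP n F a b b x then true
  else if condP n F a b b x > condP n F a b a x then false
  else decide (Prefers (x i₀) a b)

/-- `x` is a minority preference on the pair `(a,b)`. -/
def MinorityOn (n : ℕ) (F : Profile n → Fin 3) (i₀ : Fin n) (a b : Fin 3)
    (x : Profile n) : Prop :=
  (F x = a ∧ Gscf n F a b i₀ x = false) ∨ (F x = b ∧ Gscf n F a b i₀ x = true)

/-- `N^{a,b}(F)`: the probability that a uniform profile is a minority preference on `(a,b)`. -/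
noncomputable def Nab (n : ℕ) (F : Profile n → Fin 3) (i₀ : Fin n) (a b : Fin 3) : ℝ :=
  ((univ.filter (fun x : Profile n => MinorityOn n F i₀ a b x)).card : ℝ) /
  (Fintype.card (Profile n) : ℝ)

lemma prefers_flip {σ : Order3} {a b : Fin 3} (hab : a ≠ b) :
    Prefers σ b a ↔ ¬ Prefers σ a b := by
  have h : σ a ≠ σ b := fun h => hab (σ.injective h)
  unfold Prefers
  constructor
  · exact fun hba hab' => absurd hba (asymm hab')
  · exact fun hn => h.lt_or_gt.resolve_left hn

lemma card_prefers {a b : Fin 3} (hab : a ≠ b) :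
    (univ.filter fun σ : Order3 => Prefers σ a b).card = 3 := by
  have hbij : (univ.filter fun σ : Order3 => Prefers σ a b).card
      = (univ.filter fun σ : Order3 => Prefers σ b a).card := by
    apply Finset.card_nbij' (fun σ => (Equiv.swap a b).trans σ)
      (fun σ => (Equiv.swap a b).trans σ)
    · intro σ hσ
      rw [Finset.mem_coe, Finset.mem_filter] at hσ ⊢
      simp only [mem_filter, mem_univ, true_and, Prefers, Equiv.trans_apply,
        Equiv.swap_apply_left, Equiv.swap_apply_right] at *
      exact hσ
    · intro σ hσ
      rw [Finset.mem_coe, Finset.mem_filter] at hσ ⊢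
      simp only [mem_filter, mem_univ, true_and, Prefers, Equiv.trans_apply,
        Equiv.swap_apply_left, Equiv.swap_apply_right] at *
      exact hσ
    · intro σ _
      ext c
      simp [Equiv.swap_apply_self]
    · intro σ _
      ext c
      simp [Equiv.swap_apply_self]
  have hneg : (univ.filter fun σ : Order3 => Prefers σ b a)
      = (univ.filter fun σ : Order3 => ¬ Prefers σ a b) := by
    ext σ; simp [prefers_flip hab]
  have hsplit : (univ.filter fun σ : Order3 => Prefers σ a b).card
      + (univ.filter fun σ : Order3 => ¬ Prefers σ a b).card = 6 := by
    rw [Finset.card_filter_add_card_filter_not]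
    simp [Finset.card_univ, Fintype.card_perm]
    decide
  rw [hneg] at hbij
  omega

lemma card_decide_prefers {a b : Fin 3} (hab : a ≠ b) (t : Bool) :
    (univ.filter fun σ : Order3 => decide (Prefers σ a b) = t).card = 3 := by
  cases t
  · have : (univ.filter fun σ : Order3 => decide (Prefers σ a b) = false)
        = (univ.filter fun σ : Order3 => Prefers σ b a) := by
      ext σ; simp [prefers_flip hab]
    rw [this, card_prefers hab.symm]
  · have : (univ.filter fun σ : Order3 => decide (Prefers σ a b) = true)
        = (univ.filter fun σ : Order3 => Prefers σ a b) := by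
      ext σ; simp
    rw [this, card_prefers hab]

lemma card_col_eq (n : ℕ) {a b : Fin 3} (hab : a ≠ b) (z : Fin n → Bool) :
    (univ.filter fun x : Profile n => col n x a b = z).card = 3 ^ n := by
  have he : (univ.filter fun x : Profile n => col n x a b = z)
      = Fintype.piFinset (fun i => univ.filter fun σ : Order3 =>
          decide (Prefers σ a b) = z i) := by
    ext x
    simp [Fintype.mem_piFinset, col, funext_iff]
  rw [he, Fintype.card_piFinset]
  simp [card_decide_prefers hab]

lemma card_profile (n : ℕ) : Fintype.card (Profile n) = 6 ^ n := by
  rw [Fintype.card_fun]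
  simp [Fintype.card_perm]
  norm_num [Nat.factorial]

lemma col_flip (n : ℕ) {a b : Fin 3} (hab : a ≠ b) (x y : Profile n) :
    (col n y b a = col n x b a) ↔ (col n y a b = col n x a b) := by
  simp only [col, funext_iff, decide_eq_decide]
  constructor
  · intro h i
    have := h i
    rw [prefers_flip hab, prefers_flip hab] at this
    exact not_iff_not.mp this
  · intro h i
    rw [prefers_flip hab, prefers_flip hab]
    exact not_iff_not.mpr (h i)

lemma condP_flip (n : ℕ) (F : Profile n → Fin 3) {a b : Fin 3} (hab : a ≠ b)
    (w : Fin 3) (x : Profile n) : condP n F b a w x = condP n F a b w x := by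
  unfold condP
  simp only [col_flip n hab x]

lemma gscf_flip (n : ℕ) (F : Profile n → Fin 3) (i₀ : Fin n) {a b : Fin 3} (hab : a ≠ b)
    (x : Profile n) (h : Gscf n F b a i₀ x = false) : Gscf n F a b i₀ x = true := by
  unfold Gscf at h ⊢
  rw [condP_flip n F hab a x, condP_flip n F hab b x] at h
  by_cases h1 : condP n F a b a x > condP n F a b b x
  · rw [if_pos h1]
  by_cases h2 : condP n F a b b x > condP n F a b a x
  · rw [if_pos h2] at h
    exact absurd h (by simp)
  · rw [if_neg h2, if_neg h1] at h
    rw [if_neg h1, if_neg h2]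
    simp only [decide_eq_false_iff_not] at h
    simp only [decide_eq_true_eq]
    rw [prefers_flip hab] at h
    exact not_not.mp h

lemma condP_on_fiber (n : ℕ) (F : Profile n → Fin 3) {a b : Fin 3} (hab : a ≠ b)
    (w : Fin 3) (z : Fin n → Bool) (x : Profile n) (hx : col n x a b = z) :
    condP n F a b w x =
      ((univ.filter fun y : Profile n => col n y a b = z ∧ F y = w).card : ℝ) / (3 ^ n : ℝ) := by
  unfold condP
  rw [hx, card_col_eq n hab z]
  norm_cast

lemma gscf_on_fiber (n : ℕ) (F : Profile n → Fin 3) (i₀ : Fin n) {a b : Fin 3} (hab : a ≠ b)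
    (z : Fin n → Bool) (x y : Profile n) (hx : col n x a b = z) (hy : col n y a b = z) :
    Gscf n F a b i₀ x = Gscf n F a b i₀ y := by
  unfold Gscf
  rw [condP_on_fiber n F hab a z x hx, condP_on_fiber n F hab a z y hy,
    condP_on_fiber n F hab b z x hx, condP_on_fiber n F hab b z y hy]
  have hd : decide (Prefers (x i₀) a b) = decide (Prefers (y i₀) a b) := by
    have h1 := congrFun hx i₀
    have h2 := congrFun hy i₀
    simp only [col] at h1 h2
    rw [h1, h2]
  rw [hd]

lemma fiber_key (n : ℕ) (F : Profile n → Fin 3) (i₀ : Fin n) {a b : Fin 3} (hab : a ≠ b)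
    (z : Fin n → Bool) :
    (univ.filter fun x : Profile n => col n x a b = z ∧ MinorityOn n F i₀ a b x).card ^ 2
    ≤ (univ.filter fun x : Profile n => col n x a b = z ∧ F x = a).card *
      (univ.filter fun x : Profile n => col n x a b = z ∧ F x = b).card := by
  by_cases hne : (univ.filter fun x : Profile n =>
      col n x a b = z ∧ MinorityOn n F i₀ a b x).Nonempty
  swap
  · rw [Finset.not_nonempty_iff_eq_empty.mp hne]
    simp
  obtain ⟨x₀, hx₀⟩ := hne
  rw [mem_filter] at hx₀
  obtain ⟨-, hz₀, hmin₀⟩ := hx₀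
  have h3pos : (0:ℝ) < (3:ℝ) ^ n := by positivity
  cases hg : Gscf n F a b i₀ x₀ with
  | true =>
    have hBA : (univ.filter fun x : Profile n => col n x a b = z ∧ F x = b).card
        ≤ (univ.filter fun x : Profile n => col n x a b = z ∧ F x = a).card := by
      have hnot : ¬ condP n F a b b x₀ > condP n F a b a x₀ := by
        intro hgt
        unfold Gscf at hg
        rw [if_neg (asymm hgt), if_pos hgt] at hg
        simp at hg
      rw [condP_on_fiber n F hab a z x₀ hz₀, condP_on_fiber n F hab b z x₀ hz₀] at hnot
      have h1 := le_of_not_gt hnot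
      have h2 := (div_le_div_iff_of_pos_right h3pos).mp h1
      exact_mod_cast h2
    have hMB : (univ.filter fun x : Profile n => col n x a b = z ∧ MinorityOn n F i₀ a b x).card
        ≤ (univ.filter fun x : Profile n => col n x a b = z ∧ F x = b).card := by
      apply Finset.card_le_card
      intro x hx
      rw [mem_filter] at hx ⊢
      obtain ⟨hu, hxz, hmin⟩ := hx
      refine ⟨hu, hxz, ?_⟩
      rcases hmin with ⟨hfa, hgf⟩ | ⟨hfb, -⟩
      · rw [gscf_on_fiber n F i₀ hab z x x₀ hxz hz₀, hg] at hgf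
        exact absurd hgf (by simp)
      · exact hfb
    calc (univ.filter fun x : Profile n =>
          col n x a b = z ∧ MinorityOn n F i₀ a b x).card ^ 2
        ≤ (univ.filter fun x : Profile n => col n x a b = z ∧ F x = b).card ^ 2 :=
          Nat.pow_le_pow_left hMB 2
      _ ≤ _ := by
          rw [sq]
          exact Nat.mul_le_mul_right _ hBA
  | false =>
    have hAB : (univ.filter fun x : Profile n => col n x a b = z ∧ F x = a).card
        ≤ (univ.filter fun x : Profile n => col n x a b = z ∧ F x = b).card := by
      have hnot : ¬ condP n F a b a x₀ > condP n F a b b x₀ := by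
        intro hgt
        unfold Gscf at hg
        rw [if_pos hgt] at hg
        simp at hg
      rw [condP_on_fiber n F hab a z x₀ hz₀, condP_on_fiber n F hab b z x₀ hz₀] at hnot
      have h1 := le_of_not_gt hnot
      have h2 := (div_le_div_iff_of_pos_right h3pos).mp h1
      exact_mod_cast h2
    have hMA : (univ.filter fun x : Profile n => col n x a b = z ∧ MinorityOn n F i₀ a b x).card
        ≤ (univ.filter fun x : Profile n => col n x a b = z ∧ F x = a).card := by
      apply Finset.card_le_card
      intro x hx
      rw [mem_filter] at hx ⊢
      obtain ⟨hu, hxz, hmin⟩ := hx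
      refine ⟨hu, hxz, ?_⟩
      rcases hmin with ⟨hfa, -⟩ | ⟨hfb, hgf⟩
      · exact hfa
      · rw [gscf_on_fiber n F i₀ hab z x x₀ hxz hz₀, hg] at hgf
        exact absurd hgf (by simp)
    calc (univ.filter fun x : Profile n =>
          col n x a b = z ∧ MinorityOn n F i₀ a b x).card ^ 2
        ≤ (univ.filter fun x : Profile n => col n x a b = z ∧ F x = a).card ^ 2 :=
          Nat.pow_le_pow_left hMA 2
      _ ≤ _ := by
          rw [sq]
          exact Nat.mul_le_mul_left _ hAB

lemma nab_num_sum (n : ℕ) (F : Profile n → Fin 3) (i₀ : Fin n) (a b : Fin 3) :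
    (univ.filter fun x : Profile n => MinorityOn n F i₀ a b x).card
    = ∑ z : Fin n → Bool,
        (univ.filter fun x : Profile n => col n x a b = z ∧ MinorityOn n F i₀ a b x).card := by
  rw [Finset.card_eq_sum_card_fiberwise (f := fun x => col n x a b) (t := univ)
    (fun x _ => mem_univ _)]
  refine Finset.sum_congr rfl fun z _ => ?_
  congr 1
  ext x
  simp only [mem_filter, mem_univ, true_and]
  tauto

lemma mab_num_sum (n : ℕ) (F : Profile n → Fin 3) (a b : Fin 3) :
    (univ.filter fun p : Profile n × Profile n =>
        col n p.1 a b = col n p.2 a b ∧ F p.1 = a ∧ F p.2 = b).card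
    = ∑ z : Fin n → Bool,
        (univ.filter fun x : Profile n => col n x a b = z ∧ F x = a).card *
        (univ.filter fun x : Profile n => col n x a b = z ∧ F x = b).card := by
  rw [Finset.card_eq_sum_card_fiberwise (f := fun p => col n p.1 a b) (t := univ)
    (fun x _ => mem_univ _)]
  refine Finset.sum_congr rfl fun z _ => ?_
  rw [← Finset.card_product]
  congr 1
  ext ⟨x, y⟩
  simp only [mem_filter, mem_univ, true_and, Finset.mem_product]
  constructor
  · rintro ⟨⟨hc, hx, hy⟩, hz⟩
    exact ⟨⟨hz, hx⟩, hc.symm.trans hz, hy⟩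
  · rintro ⟨⟨hz1, hx⟩, hz2, hy⟩
    exact ⟨⟨hz1.trans hz2.symm, hx, hy⟩, hz1⟩

lemma mab_den_sum (n : ℕ) (F : Profile n → Fin 3) {a b : Fin 3} (hab : a ≠ b) :
    (univ.filter fun p : Profile n × Profile n =>
        col n p.1 a b = col n p.2 a b).card = 2 ^ n * (3 ^ n * 3 ^ n) := by
  rw [Finset.card_eq_sum_card_fiberwise (f := fun p => col n p.1 a b) (t := univ)
    (fun x _ => mem_univ _)]
  have hz : ∀ z ∈ (univ : Finset (Fin n → Bool)),
      ((univ.filter fun p : Profile n × Profile n =>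
        col n p.1 a b = col n p.2 a b).filter fun p => col n p.1 a b = z).card
      = 3 ^ n * 3 ^ n := by
    intro z _
    have he : ((univ.filter fun p : Profile n × Profile n =>
        col n p.1 a b = col n p.2 a b).filter fun p => col n p.1 a b = z)
        = (univ.filter fun x : Profile n => col n x a b = z) ×ˢ
          (univ.filter fun x : Profile n => col n x a b = z) := by
      ext ⟨x, y⟩
      simp only [mem_filter, mem_univ, true_and, Finset.mem_product]
      constructor
      · rintro ⟨hc, hz1⟩
        exact ⟨hz1, hc.symm.trans hz1⟩
      · rintro ⟨hz1, hz2⟩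
        exact ⟨hz1.trans hz2.symm, hz1⟩
    rw [he, Finset.card_product, card_col_eq n hab z]
  rw [Finset.sum_congr rfl hz, Finset.sum_const, smul_eq_mul, card_univ]
  congr 1
  rw [Fintype.card_fun]
  simp

lemma nab_le_sqrt (n : ℕ) (F : Profile n → Fin 3) (i₀ : Fin n) {a b : Fin 3} (hab : a ≠ b) :
    Nab n F i₀ a b ≤ Real.sqrt (Mab n F a b) := by
  have hMabEq : Mab n F a b
      = ((∑ z : Fin n → Bool,
          (univ.filter fun x : Profile n => col n x a b = z ∧ F x = a).card *
          (univ.filter fun x : Profile n => col n x a b = z ∧ F x = b).card : ℕ) : ℝ) /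
        ((2:ℝ) ^ n * ((3:ℝ) ^ n * (3:ℝ) ^ n)) := by
    unfold Mab
    rw [mab_num_sum n F a b, mab_den_sum n F hab]
    push_cast
    ring
  have hMab_nonneg : 0 ≤ Mab n F a b := by
    rw [hMabEq]; positivity
  have hNab_nonneg : 0 ≤ Nab n F i₀ a b := by
    unfold Nab; positivity
  rw [Real.le_sqrt hNab_nonneg hMab_nonneg]
  have hNabEq : Nab n F i₀ a b
      = ((∑ z : Fin n → Bool,
          (univ.filter fun x : Profile n =>
            col n x a b = z ∧ MinorityOn n F i₀ a b x).card : ℕ) : ℝ) / (6:ℝ) ^ n := by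
    unfold Nab
    rw [nab_num_sum n F i₀ a b, card_profile n]
    push_cast
    ring
  have hcard2 : ((univ : Finset (Fin n → Bool)).card : ℝ) = (2:ℝ) ^ n := by
    rw [card_univ, Fintype.card_fun]
    push_cast
    simp
  have key : ((∑ z : Fin n → Bool,
        (univ.filter fun x : Profile n =>
          col n x a b = z ∧ MinorityOn n F i₀ a b x).card : ℕ) : ℝ) ^ 2
      ≤ (2:ℝ) ^ n * ((∑ z : Fin n → Bool,
          (univ.filter fun x : Profile n => col n x a b = z ∧ F x = a).card *
          (univ.filter fun x : Profile n => col n x a b = z ∧ F x = b).card : ℕ) : ℝ) := by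
    push_cast
    calc (∑ z : Fin n → Bool, ((univ.filter fun x : Profile n =>
            col n x a b = z ∧ MinorityOn n F i₀ a b x).card : ℝ)) ^ 2
        ≤ ((univ : Finset (Fin n → Bool)).card : ℝ) * ∑ z : Fin n → Bool,
            ((univ.filter fun x : Profile n =>
              col n x a b = z ∧ MinorityOn n F i₀ a b x).card : ℝ) ^ 2 :=
          sq_sum_le_card_mul_sum_sq
      _ = (2:ℝ) ^ n * ∑ z : Fin n → Bool,
            ((univ.filter fun x : Profile n =>
              col n x a b = z ∧ MinorityOn n F i₀ a b x).card : ℝ) ^ 2 := by rw [hcard2]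
      _ ≤ (2:ℝ) ^ n * ∑ z : Fin n → Bool,
            ((univ.filter fun x : Profile n => col n x a b = z ∧ F x = a).card : ℝ) *
            ((univ.filter fun x : Profile n => col n x a b = z ∧ F x = b).card : ℝ) := by
          apply mul_le_mul_of_nonneg_left _ (by positivity)
          apply Finset.sum_le_sum
          intro z _
          exact_mod_cast fiber_key n F i₀ hab z
  rw [hNabEq, hMabEq, div_pow]
  rw [div_le_div_iff₀ (by positivity) (by positivity)]
  calc ((∑ z : Fin n → Bool,
          (univ.filter fun x : Profile n =>
            col n x a b = z ∧ MinorityOn n F i₀ a b x).card : ℕ) : ℝ) ^ 2 *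
        ((2:ℝ) ^ n * ((3:ℝ) ^ n * (3:ℝ) ^ n))
      ≤ ((2:ℝ) ^ n * ((∑ z : Fin n → Bool,
          (univ.filter fun x : Profile n => col n x a b = z ∧ F x = a).card *
          (univ.filter fun x : Profile n => col n x a b = z ∧ F x = b).card : ℕ) : ℝ)) *
        ((2:ℝ) ^ n * ((3:ℝ) ^ n * (3:ℝ) ^ n)) :=
        mul_le_mul_of_nonneg_right key (by positivity)
    _ = ((∑ z : Fin n → Bool,
          (univ.filter fun x : Profile n => col n x a b = z ∧ F x = a).card *
          (univ.filter fun x : Profile n => col n x a b = z ∧ F x = b).card : ℕ) : ℝ) *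
        ((6:ℝ) ^ n) ^ 2 := by
        rw [show (6:ℝ) = 2 * 3 by norm_num, mul_pow]
        ring

lemma no_gcw_minority (n : ℕ) (F : Profile n → Fin 3) (i₀ : Fin n) (x : Profile n)
    (h : ¬ ∃ a : Fin 3, ∀ b : Fin 3, b ≠ a → Gscf n F a b i₀ x = true) :
    MinorityOn n F i₀ 0 1 x ∨ MinorityOn n F i₀ 0 2 x ∨ MinorityOn n F i₀ 1 2 x := by
  push_neg at h
  obtain ⟨c, hc, hg⟩ := h (F x)
  simp only [ne_eq, Bool.not_eq_true] at hg
  generalize hw : F x = w at hc hg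
  fin_cases w <;> fin_cases c <;> simp_all <;> unfold MinorityOn
  · exact Or.inl (Or.inl ⟨hw, hg⟩)
  · exact Or.inr (Or.inl (Or.inl ⟨hw, hg⟩))
  · exact Or.inl (Or.inr ⟨hw, gscf_flip n F i₀ (by decide) x hg⟩)
  · exact Or.inr (Or.inr (Or.inl ⟨hw, hg⟩))
  · exact Or.inr (Or.inl (Or.inr ⟨hw, gscf_flip n F i₀ (by decide) x hg⟩))
  · exact Or.inr (Or.inr (Or.inr ⟨hw, gscf_flip n F i₀ (by decide) x hg⟩))

/-- If `M^{a,b}(F) ≤ ε₁` for all pairs, then the derived GSWF `G` fails to have a Generalized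
Condorcet Winner (equivalently, among 3 alternatives, is non-transitive) with probability at
most `3·√ε₁`. -/
theorem stmt12 (n : ℕ) (F : Profile n → Fin 3) (i₀ : Fin n) (ε₁ : ℝ)
    (h : ∀ a b : Fin 3, a ≠ b → Mab n F a b ≤ ε₁) :
    ((univ.filter (fun x : Profile n =>
        ¬ ∃ a : Fin 3, ∀ b : Fin 3, b ≠ a → Gscf n F a b i₀ x = true)).card : ℝ) /
      (Fintype.card (Profile n) : ℝ) ≤ 3 * Real.sqrt ε₁ := by
  have hle : ∀ (a b : Fin 3), a ≠ b → Nab n F i₀ a b ≤ Real.sqrt ε₁ := fun a b hab =>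
    le_trans (nab_le_sqrt n F i₀ hab) (Real.sqrt_le_sqrt (h a b hab))
  have hsub : (univ.filter fun x : Profile n =>
        ¬ ∃ a : Fin 3, ∀ b : Fin 3, b ≠ a → Gscf n F a b i₀ x = true)
      ⊆ (univ.filter fun x : Profile n => MinorityOn n F i₀ 0 1 x) ∪
        ((univ.filter fun x : Profile n => MinorityOn n F i₀ 0 2 x) ∪
         (univ.filter fun x : Profile n => MinorityOn n F i₀ 1 2 x)) := by
    intro x hx
    rw [mem_filter] at hx
    rcases no_gcw_minority n F i₀ x hx.2 with h' | h' | h' <;>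
      simp [Finset.mem_union, mem_filter, h']
  have hcard : ((univ.filter fun x : Profile n =>
        ¬ ∃ a : Fin 3, ∀ b : Fin 3, b ≠ a → Gscf n F a b i₀ x = true).card : ℝ)
      ≤ ((univ.filter fun x : Profile n => MinorityOn n F i₀ 0 1 x).card : ℝ)
      + ((univ.filter fun x : Profile n => MinorityOn n F i₀ 0 2 x).card : ℝ)
      + ((univ.filter fun x : Profile n => MinorityOn n F i₀ 1 2 x).card : ℝ) := by
    have h1 := Finset.card_le_card hsub
    have h2 := Finset.card_union_le
      (univ.filter fun x : Profile n => MinorityOn n F i₀ 0 1 x)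
      ((univ.filter fun x : Profile n => MinorityOn n F i₀ 0 2 x) ∪
       (univ.filter fun x : Profile n => MinorityOn n F i₀ 1 2 x))
    have h3 := Finset.card_union_le
      (univ.filter fun x : Profile n => MinorityOn n F i₀ 0 2 x)
      (univ.filter fun x : Profile n => MinorityOn n F i₀ 1 2 x)
    have hN := le_trans h1 (le_trans h2 (Nat.add_le_add_left h3 _))
    have hR : ((univ.filter fun x : Profile n =>
        ¬ ∃ a : Fin 3, ∀ b : Fin 3, b ≠ a → Gscf n F a b i₀ x = true).card : ℝ)
        ≤ (((univ.filter fun x : Profile n => MinorityOn n F i₀ 0 1 x).card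
          + ((univ.filter fun x : Profile n => MinorityOn n F i₀ 0 2 x).card
          + (univ.filter fun x : Profile n => MinorityOn n F i₀ 1 2 x).card) : ℕ) : ℝ) := by
      exact_mod_cast hN
    push_cast at hR
    linarith
  have hP : (0:ℝ) < (Fintype.card (Profile n) : ℝ) := by
    rw [card_profile]; positivity
  calc ((univ.filter fun x : Profile n =>
        ¬ ∃ a : Fin 3, ∀ b : Fin 3, b ≠ a → Gscf n F a b i₀ x = true).card : ℝ) /
      (Fintype.card (Profile n) : ℝ)
      ≤ (((univ.filter fun x : Profile n => MinorityOn n F i₀ 0 1 x).card : ℝ)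
        + ((univ.filter fun x : Profile n => MinorityOn n F i₀ 0 2 x).card : ℝ)
        + ((univ.filter fun x : Profile n => MinorityOn n F i₀ 1 2 x).card : ℝ)) /
        (Fintype.card (Profile n) : ℝ) := by
        gcongr
    _ = Nab n F i₀ 0 1 + Nab n F i₀ 0 2 + Nab n F i₀ 1 2 := by
        unfold Nab; ring
    _ ≤ Real.sqrt ε₁ + Real.sqrt ε₁ + Real.sqrt ε₁ :=
        add_le_add (add_le_add (hle 0 1 (by decide)) (hle 0 2 (by decide)))
          (hle 1 2 (by decide))
    _ = 3 * Real.sqrt ε₁ := by ring
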